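/- For a multiplicative hyperring R with zero absorbing property, Nil_α(R) ⊆ ᵅ√⟨0⟩, where ᵅ√J = {r ∈ R : α(rⁿ) ⊆ J for some n ∈ ℕ}; moreover equality holds since ⟨0⟩ is a C-hyperideal. -/
import Mathlib


open Pointwise

namespace HyperPaper

/-- A commutative multiplicative hyperring on an additive commutative group:
the hypermultiplication is associative, commutative, subdistributive over `+`,
and compatible with negation. -/
structure MulHyperring (R : Type*) [AddCommGroup R] where
  hmul : R → R → Set R
  nonempty : ∀ a b, (hmul a b).Nonempty
  comm : ∀ a b, hmul a b = hmul b a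
  assoc : ∀ a b c, (⋃ t ∈ hmul a b, hmul t c) = ⋃ t ∈ hmul b c, hmul a t
  distrib : ∀ a b c, hmul a (b + c) ⊆ hmul a b + hmul a c
  hmul_neg : ∀ a b, hmul a (-b) = -(hmul a b)

variable {R : Type*} [AddCommGroup R]

/-- Product of two subsets under the hyperoperation. -/
def MulHyperring.setMul (H : MulHyperring R) (A B : Set R) : Set R :=
  ⋃ a ∈ A, ⋃ b ∈ B, H.hmul a b

/-- `H.hpow a n` is the `(n+1)`-fold hyperproduct `a ∘ a ∘ ⋯ ∘ a`. -/
def MulHyperring.hpow (H : MulHyperring R) (a : R) : ℕ → Set R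
  | 0 => {a}
  | n + 1 => H.setMul {a} (H.hpow a n)

/-- `H.hprod a l` is the hyperproduct of the list `a :: l`. -/
def MulHyperring.hprod (H : MulHyperring R) (a : R) : List R → Set R
  | [] => {a}
  | b :: l => H.setMul {a} (H.hprod b l)

/-- A hyperideal: an additive subgroup absorbing hypermultiplication. -/
structure Hyperideal (H : MulHyperring R) where
  carrier : Set R
  zero_mem : (0 : R) ∈ carrier
  sub_mem : ∀ a b, a ∈ carrier → b ∈ carrier → a - b ∈ carrier
  absorb : ∀ r x, x ∈ carrier → H.hmul r x ⊆ carrier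

/-- A C-hyperideal: any finite hyperproduct meeting it is contained in it. -/
def IsCHyperideal (H : MulHyperring R) (I : Hyperideal H) : Prop :=
  ∀ a (l : List R), (H.hprod a l ∩ I.carrier).Nonempty → H.hprod a l ⊆ I.carrier

/-- A good homomorphism between multiplicative hyperrings. -/
def IsGoodHom {R₁ R₂ : Type*} [AddCommGroup R₁] [AddCommGroup R₂]
    (H₁ : MulHyperring R₁) (H₂ : MulHyperring R₂) (f : R₁ → R₂) : Prop :=
  (∀ x y, f (x + y) = f x + f y) ∧ ∀ x y, f '' H₁.hmul x y = H₂.hmul (f x) (f y)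

/-- A good endomorphism. -/
def IsGoodEndo (H : MulHyperring R) (α : R → R) : Prop :=
  IsGoodHom H H α

/-- A proper hyperideal `I` is `α`-prime if `x ∘ y ⊆ I` implies `x ∈ I` or `α y ∈ I`. -/
def IsAlphaPrime (H : MulHyperring R) (α : R → R) (I : Hyperideal H) : Prop :=
  I.carrier ≠ Set.univ ∧
    ∀ x y, H.hmul x y ⊆ I.carrier → x ∈ I.carrier ∨ α y ∈ I.carrier

/-- A proper hyperideal `I` is prime if `x ∘ y ⊆ I` implies `x ∈ I` or `y ∈ I`. -/
def IsPrime (H : MulHyperring R) (I : Hyperideal H) : Prop :=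
  I.carrier ≠ Set.univ ∧
    ∀ x y, H.hmul x y ⊆ I.carrier → x ∈ I.carrier ∨ y ∈ I.carrier

/-- The radical `√S = {r | rⁿ ⊆ S for some n}`. -/
def radical (H : MulHyperring R) (S : Set R) : Set R :=
  {r | ∃ n : ℕ, H.hpow r n ⊆ S}

/-- The `α`-radical `ᵅ√S = {r | α(rⁿ) ⊆ S for some n}`. -/
def alphaRad (H : MulHyperring R) (α : R → R) (S : Set R) : Set R :=
  {r | ∃ n : ℕ, α '' H.hpow r n ⊆ S}

/-- The set of `α`-nilpotent elements. -/
def nilAlpha (H : MulHyperring R) (α : R → R) : Set R :=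
  {x | ∃ n : ℕ, (0 : R) ∈ α '' H.hpow x n}

/-- The `n`-fold set power of a hyperideal carrier: `idealPow H S n = S^(n+1)`. -/
def idealPow (H : MulHyperring R) (S : Set R) : ℕ → Set R
  | 0 => S
  | n + 1 => H.setMul S (idealPow H S n)

end HyperPaper

open HyperPaper

namespace HyperPaper

variable {R : Type*} [AddCommGroup R]

lemma hpow_nonempty (H : MulHyperring R) (a : R) (n : ℕ) :
    (H.hpow a n).Nonempty := by
  induction n with
  | zero => exact ⟨a, rfl⟩
  | succ n ih =>
    obtain ⟨b, hb⟩ := ih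
    obtain ⟨c, hc⟩ := H.nonempty a b
    exact ⟨c, Set.mem_iUnion₂.2 ⟨a, rfl, Set.mem_iUnion₂.2 ⟨b, hb, hc⟩⟩⟩

lemma image_hpow (H : MulHyperring R) (α : R → R) (hα : IsGoodEndo H α)
    (a : R) (n : ℕ) : α '' H.hpow a n = H.hpow (α a) n := by
  induction n with
  | zero => simp [MulHyperring.hpow]
  | succ n ih =>
    have h1 : H.hpow a (n + 1) = ⋃ b ∈ H.hpow a n, H.hmul a b := by
      simp [MulHyperring.hpow, MulHyperring.setMul]
    have h2 : H.hpow (α a) (n + 1) = ⋃ b ∈ H.hpow (α a) n, H.hmul (α a) b := by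
      simp [MulHyperring.hpow, MulHyperring.setMul]
    rw [h1, h2, Set.image_iUnion₂, ← ih, Set.biUnion_image]
    exact Set.iUnion₂_congr fun b _ => hα.2 a b

lemma hpow_eq_hprod (H : MulHyperring R) (a : R) (n : ℕ) :
    H.hpow a n = H.hprod a (List.replicate n a) := by
  induction n with
  | zero => rfl
  | succ n ih => simp [MulHyperring.hpow, MulHyperring.hprod, List.replicate, ih]

end HyperPaper

/-- `Nil_α(R) ⊆ ᵅ√⟨0⟩`, with equality since `⟨0⟩` is a
C-hyperideal. -/
theorem stmt12 {R : Type*} [AddCommGroup R] (H : MulHyperring R) (α : R → R)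
    (hα : IsGoodEndo H α) (hzero : ∀ r : R, H.hmul 0 r = {(0 : R)})
    (Z : Hyperideal H) (hZmin : ∀ J : Hyperideal H, Z.carrier ⊆ J.carrier)
    (hZC : IsCHyperideal H Z) :
    nilAlpha H α ⊆ alphaRad H α Z.carrier ∧
      nilAlpha H α = alphaRad H α Z.carrier := by
  -- Z.carrier = {0}
  have hJ0 : Z.carrier = {(0 : R)} := by
    have : Z.carrier ⊆ ({0} : Set R) := hZmin
      { carrier := {0}
        zero_mem := rfl
        sub_mem := by rintro a b rfl rfl; simp
        absorb := by
          rintro r x rfl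
          rw [H.comm, hzero] }
    exact subset_antisymm this (by rintro x rfl; exact Z.zero_mem)
  have hsub : nilAlpha H α ⊆ alphaRad H α Z.carrier := by
    rintro x ⟨n, hn⟩
    refine ⟨n, ?_⟩
    rw [image_hpow H α hα, hpow_eq_hprod] at hn ⊢
    exact hZC _ _ ⟨0, hn, Z.zero_mem⟩
  refine ⟨hsub, subset_antisymm hsub ?_⟩
  rintro x ⟨n, hn⟩
  rw [hJ0] at hn
  obtain ⟨b, hb⟩ := hpow_nonempty H x n
  exact ⟨n, by have := hn ⟨b, hb, rfl⟩; simp at this; rw [← this]; exact ⟨b, hb, rfl⟩⟩
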